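/- arXiv:0806.2599 — 2 statements merged into one kernel-verified Lean document; each statement's English description precedes it below -/
import Mathlib

section
/- Let (γ,δ) be a pair of partitions. For every index 1 ≤ j ≤ l(δ), the number of parts of γ other than γ_1 that are strictly greater than δ_j is at least the number of unbalanced parts δ_l with l < j; that is, #{i ≥ 2 : γ_i > δ_j} ≥ #{l < j : δ_l is unbalanced}. -/
/-- A partition: a nonincreasing list of positive integers. -/
def Ptn : Type := {l : List ℕ // l.Pairwise (· ≥ ·) ∧ ∀ x ∈ l, 0 < x}

namespace Ptn
/-- the list of parts -/
def parts (p : Ptn) : List ℕ := p.1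
/-- the weight `|λ|`: the sum of the parts -/
def wt (p : Ptn) : ℕ := p.parts.sum
/-- the length `l(λ)`: the number of parts -/
def len (p : Ptn) : ℕ := p.parts.length
/-- the largest part (`0` for the empty partition) -/
def maxPart (p : Ptn) : ℕ := p.parts.headI
/-- the Dyson rank: largest part minus number of parts -/
def rank (p : Ptn) : ℤ := (p.maxPart : ℤ) - (p.len : ℤ)
end Ptn

/-- `N(m;n)`: the number of partitions of `n` with rank `m`. -/
noncomputable def rankCount (m : ℤ) (n : ℕ) : ℕ :=
  {p : Ptn | p.wt = n ∧ p.rank = m}.ncard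

/-- A Durfee symbol `(α,β)_D`. -/
structure DurfeeSymbol where
  α : Ptn
  β : Ptn
  D : ℕ
  hD : 0 < D
  hα : ∀ x ∈ α.parts, x ≤ D
  hβ : ∀ x ∈ β.parts, x ≤ D

namespace DurfeeSymbol
/-- the number being represented -/
def wt (s : DurfeeSymbol) : ℕ := s.α.wt + s.β.wt + s.D ^ 2
/-- the rank of a Durfee symbol -/
def rank (s : DurfeeSymbol) : ℤ := (s.α.len : ℤ) - (s.β.len : ℤ)
end DurfeeSymbol

/-- `D_1(m;n)`: the number of Durfee symbols of `n` with rank `m`. -/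
noncomputable def durfeeCount (m : ℤ) (n : ℕ) : ℕ :=
  {s : DurfeeSymbol | s.wt = n ∧ s.rank = m}.ncard

/-- A `k`-marked Durfee symbol; the `0`-based index `i : Fin k` corresponds to the
`1`-based vector `(α^{i+1}, β^{i+1})` of the paper. -/
structure KMDS (k : ℕ) where
  α : Fin k → Ptn
  β : Fin k → Ptn
  D : ℕ
  hD : 0 < D
  /-- `α^i` is nonempty for `1 ≤ i < k` -/
  hne : ∀ i : Fin k, (i : ℕ) + 1 < k → (α i).parts ≠ []
  /-- for `1 ≤ i ≤ k-1`: largest part of `β^i` is at most largest part of `α^i`, and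
  every part of `β^{i+1}` is at least the largest part of `α^i` -/
  hord : ∀ i : Fin k, ∀ h : (i : ℕ) + 1 < k,
    (β i).maxPart ≤ (α i).maxPart ∧
    ∀ x ∈ (β ⟨(i : ℕ) + 1, h⟩).parts, (α i).maxPart ≤ x
  /-- all parts of `α^k` and `β^k` are at most `D` -/
  htop : ∀ i : Fin k, (i : ℕ) + 1 = k →
    (∀ x ∈ (α i).parts, x ≤ D) ∧ (∀ x ∈ (β i).parts, x ≤ D)

namespace KMDS
variable {k : ℕ}
/-- the number being represented -/
def wt (η : KMDS k) : ℕ := (∑ i, ((η.α i).wt + (η.β i).wt)) + η.D ^ 2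
/-- the `i`-th rank `ρ_i(η)` (with `i` zero-based) -/
def rank (η : KMDS k) (i : Fin k) : ℤ :=
  if (i : ℕ) + 1 = k then ((η.α i).len : ℤ) - ((η.β i).len : ℤ)
  else ((η.α i).len : ℤ) - ((η.β i).len : ℤ) - 1
end KMDS

/-- `D_k(m_1,…,m_k;n)`: the number of `k`-marked Durfee symbols of `n` with `i`-th rank `m_i`. -/
noncomputable def kmdsCount {k : ℕ} (m : Fin k → ℤ) (n : ℕ) : ℕ :=
  {η : KMDS k | η.wt = n ∧ ∀ i, η.rank i = m i}.ncard

/-- `D_k(n)`: the total number of `k`-marked Durfee symbols of `n`. -/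
noncomputable def kmdsTotal (k : ℕ) (n : ℕ) : ℕ := {η : KMDS k | η.wt = n}.ncard

/-- `(a,b)` is a two-line strict shifted partition: `l(a) > l(b)` and
`a_{i+1} > b_i` for `1 ≤ i ≤ l(b)` (stated with zero-based indices). -/
def StrictShifted (a b : Ptn) : Prop :=
  b.len < a.len ∧ ∀ i < b.len, b.parts.getD i 0 < a.parts.getD (i + 1) 0

/-- a `k`-marked Durfee symbol is strict shifted if every vector except the `k`-th one is a
two-line strict shifted partition -/
def KMDS.IsStrictShifted {k : ℕ} (η : KMDS k) : Prop :=
  ∀ i : Fin k, (i : ℕ) + 1 < k → StrictShifted (η.α i) (η.β i)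

/-- `D^{ss}_k(m_1,…,m_k;n)`: the number of `k`-marked strict shifted Durfee symbols of `n`
with `i`-th rank `m_i`. -/
noncomputable def kmssCount {k : ℕ} (m : Fin k → ℤ) (n : ℕ) : ℕ :=
  {η : KMDS k | η.IsStrictShifted ∧ η.wt = n ∧ ∀ i, η.rank i = m i}.ncard

/-- `balFlags γ δ i` is the list of the balanced/unbalanced flags (recursively defined)
of the parts `δ_1, …, δ_i` (zero-based: entry `j` is the flag of the part of `δ` with
zero-based index `j`): `δ_j` is balanced iff `γ_{j+1} ≤ δ_j` (one-based) and the number of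
one-based indices `i ≥ 2` with `γ_i > δ_j` equals the number of unbalanced parts before
`δ_j` in `δ`. -/
def balFlags (γ δ : List ℕ) : ℕ → List Bool
  | 0 => []
  | i + 1 =>
    let prev := balFlags γ δ i
    prev ++ [decide (γ.getD (i + 1) 0 ≤ δ.getD i 0) &&
      (((List.range γ.length).filter fun j =>
          decide (1 ≤ j) && decide (δ.getD i 0 < γ.getD j 0)).length
        == (prev.filter fun b => !b).length)]

/-- the part of `δ` with zero-based index `i` is balanced with respect to `(γ, δ)` -/
def IsBalancedIdx (γ δ : List ℕ) (i : ℕ) : Prop :=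
  (balFlags γ δ (i + 1)).getD i false = true

/-- `b(γ,δ)`: the number of balanced parts of `δ` -/
def numBalanced (γ δ : Ptn) : ℕ :=
  ((balFlags γ.parts δ.parts δ.len).filter fun b => b).length

/-- the `i`-th balanced number `nb_i(η)` (with `i` zero-based) -/
def KMDS.nb {k : ℕ} (η : KMDS k) (i : Fin k) : ℕ :=
  if (i : ℕ) + 1 = k then 0 else numBalanced (η.α i) (η.β i)

/-- An odd Durfee symbol `(α,β)_D`. -/
structure OddDurfee where
  α : Ptn
  β : Ptn
  D : ℕ
  hα : ∀ x ∈ α.parts, Odd x ∧ x ≤ 2 * D + 1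
  hβ : ∀ x ∈ β.parts, Odd x ∧ x ≤ 2 * D + 1

namespace OddDurfee
/-- the number being represented -/
def wt (s : OddDurfee) : ℕ := s.α.wt + s.β.wt + 2 * s.D ^ 2 + 2 * s.D + 1
/-- the odd rank -/
def rank (s : OddDurfee) : ℤ := (s.α.len : ℤ) - (s.β.len : ℤ)
end OddDurfee

/-- `D^0_1(m;n)`: the number of odd Durfee symbols of `n` with odd rank `m`. -/
noncomputable def oddDurfeeCount (m : ℤ) (n : ℕ) : ℕ :=
  {s : OddDurfee | s.wt = n ∧ s.rank = m}.ncard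

/-- A `k`-marked odd Durfee symbol; index conventions as in `KMDS`. -/
structure KMODS (k : ℕ) where
  α : Fin k → Ptn
  β : Fin k → Ptn
  D : ℕ
  hodd : ∀ i : Fin k, (∀ x ∈ (α i).parts, Odd x) ∧ ∀ x ∈ (β i).parts, Odd x
  hne : ∀ i : Fin k, (i : ℕ) + 1 < k → (α i).parts ≠ []
  hord : ∀ i : Fin k, ∀ h : (i : ℕ) + 1 < k,
    (β i).maxPart ≤ (α i).maxPart ∧
    ∀ x ∈ (β ⟨(i : ℕ) + 1, h⟩).parts, (α i).maxPart ≤ x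
  htop : ∀ i : Fin k, (i : ℕ) + 1 = k →
    (∀ x ∈ (α i).parts, x ≤ 2 * D + 1) ∧ (∀ x ∈ (β i).parts, x ≤ 2 * D + 1)

namespace KMODS
variable {k : ℕ}
/-- the number being represented -/
def wt (η : KMODS k) : ℕ := (∑ i, ((η.α i).wt + (η.β i).wt)) + 2 * η.D ^ 2 + 2 * η.D + 1
/-- the `i`-th odd rank (with `i` zero-based) -/
def rank (η : KMODS k) (i : Fin k) : ℤ :=
  if (i : ℕ) + 1 = k then ((η.α i).len : ℤ) - ((η.β i).len : ℤ)
  else ((η.α i).len : ℤ) - ((η.β i).len : ℤ) - 1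
end KMODS

/-- `D^0_k(m_1,…,m_k;n)` -/
noncomputable def kmodsCount {k : ℕ} (m : Fin k → ℤ) (n : ℕ) : ℕ :=
  {η : KMODS k | η.wt = n ∧ ∀ i, η.rank i = m i}.ncard

/-- `D^0_k(n)`: the total number of `k`-marked odd Durfee symbols of `n`. -/
noncomputable def kmodsTotal (k : ℕ) (n : ℕ) : ℕ := {η : KMODS k | η.wt = n}.ncard
instance (γ δ : List ℕ) (i : ℕ) : Decidable (IsBalancedIdx γ δ i) := by
  unfold IsBalancedIdx; infer_instance


section AuxProof

/-- the flag computed at step `n` of `balFlags` -/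
def balFlag (γ δ : List ℕ) (n : ℕ) : Bool :=
  decide (γ.getD (n + 1) 0 ≤ δ.getD n 0) &&
    (((List.range γ.length).filter fun j =>
        decide (1 ≤ j) && decide (δ.getD n 0 < γ.getD j 0)).length
      == ((balFlags γ δ n).filter fun b => !b).length)

lemma balFlags_succ (γ δ : List ℕ) (n : ℕ) :
    balFlags γ δ (n + 1) = balFlags γ δ n ++ [balFlag γ δ n] := rfl

lemma balFlags_length (γ δ : List ℕ) : ∀ n, (balFlags γ δ n).length = n
  | 0 => rfl
  | n + 1 => by
    rw [balFlags_succ, List.length_append, balFlags_length γ δ n]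
    rfl

lemma isBalancedIdx_iff_flag (γ δ : List ℕ) (n : ℕ) :
    IsBalancedIdx γ δ n ↔ balFlag γ δ n = true := by
  unfold IsBalancedIdx
  rw [balFlags_succ, List.getD_append_right _ _ _ _ (by rw [balFlags_length]),
    balFlags_length, Nat.sub_self]
  rfl

lemma listCount_eq (γ : List ℕ) (x : ℕ) :
    ((List.range γ.length).filter fun j =>
        decide (1 ≤ j) && decide (x < γ.getD j 0)).length =
      ((Finset.range γ.length).filter fun i => 1 ≤ i ∧ x < γ.getD i 0).card := by
  have h : ((Finset.range γ.length).filter fun i => 1 ≤ i ∧ x < γ.getD i 0).card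
      = ((List.range γ.length).filter fun j => decide (1 ≤ j ∧ x < γ.getD j 0)).length := rfl
  rw [h]
  congr 1
  apply List.filter_congr
  intro a _
  simp

lemma unbal_count (γ δ : List ℕ) : ∀ n,
    ((balFlags γ δ n).filter fun b => !b).length =
      ((Finset.range n).filter fun l => ¬ IsBalancedIdx γ δ l).card
  | 0 => rfl
  | n + 1 => by
    rw [balFlags_succ, List.filter_append, List.length_append, unbal_count γ δ n,
      Finset.range_add_one, Finset.filter_insert]
    by_cases h : IsBalancedIdx γ δ n
    · rw [if_neg (by simpa using h)]
      have hf : balFlag γ δ n = true := (isBalancedIdx_iff_flag γ δ n).1 h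
      simp [hf]
    · rw [if_pos h, Finset.card_insert_of_notMem (by simp)]
      have hf : balFlag γ δ n = false := by
        cases hfl : balFlag γ δ n
        · rfl
        · exact absurd ((isBalancedIdx_iff_flag γ δ n).2 hfl) h
      simp [hf, Nat.add_comm]

lemma count_unbalanced_le_aux (g d : List ℕ) (hg : g.Pairwise (· ≥ ·))
    (hd : d.Pairwise (· ≥ ·)) :
    ∀ n, n < d.length →
      ((Finset.range n).filter fun l => ¬ IsBalancedIdx g d l).card ≤
        ((Finset.range g.length).filter fun i => 1 ≤ i ∧ d.getD n 0 < g.getD i 0).card := by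
  have hmono : ∀ x y : ℕ, y ≤ x →
      ((Finset.range g.length).filter fun i => 1 ≤ i ∧ x < g.getD i 0).card ≤
      ((Finset.range g.length).filter fun i => 1 ≤ i ∧ y < g.getD i 0).card := by
    intro x y hxy
    apply Finset.card_le_card
    apply Finset.monotone_filter_right
    intro a _ ha
    exact ⟨ha.1, lt_of_le_of_lt hxy ha.2⟩
  intro n
  induction n with
  | zero => simp
  | succ n ih =>
    intro hn
    have hn' : n < d.length := by omega
    have hd1 : d.getD (n + 1) 0 ≤ d.getD n 0 := by
      rw [List.getD_eq_getElem d 0 hn, List.getD_eq_getElem d 0 hn']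
      exact List.pairwise_iff_getElem.mp hd n (n + 1) hn' hn (by omega)
    have hC := hmono _ _ hd1
    rw [Finset.range_add_one, Finset.filter_insert]
    by_cases hb : IsBalancedIdx g d n
    · rw [if_neg (by simpa using hb)]
      exact le_trans (ih hn') hC
    · rw [if_pos hb, Finset.card_insert_of_notMem (by simp)]
      have hIH := ih hn'
      by_cases hCU : ((Finset.range g.length).filter
            fun i => 1 ≤ i ∧ d.getD n 0 < g.getD i 0).card =
          ((Finset.range n).filter fun l => ¬ IsBalancedIdx g d l).card
      · -- then the first condition of balance must fail
        have hA : d.getD n 0 < g.getD (n + 1) 0 := by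
          by_contra hA
          push_neg at hA
          apply hb
          rw [isBalancedIdx_iff_flag, balFlag]
          simp only [Bool.and_eq_true, decide_eq_true_eq, beq_iff_eq]
          exact ⟨hA, by rw [listCount_eq, unbal_count]; exact hCU⟩
        have hlen : n + 1 < g.length := by
          by_contra hl
          have h0 : g.getD (n + 1) 0 = 0 :=
            List.getD_eq_default g 0 (Nat.le_of_not_lt hl)
          omega
        have hsub : Finset.Icc 1 (n + 1) ⊆
            (Finset.range g.length).filter fun i => 1 ≤ i ∧ d.getD n 0 < g.getD i 0 := by
          intro i hi
          rw [Finset.mem_Icc] at hi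
          rw [Finset.mem_filter, Finset.mem_range]
          refine ⟨by omega, hi.1, ?_⟩
          rcases eq_or_lt_of_le hi.2 with h | h
          · rw [h]; exact hA
          · have hig : i < g.length := by omega
            have := List.pairwise_iff_getElem.mp hg i (n + 1) hig hlen h
            rw [List.getD_eq_getElem g 0 hig]
            rw [List.getD_eq_getElem g 0 hlen] at hA
            omega
        have hcard := Finset.card_le_card hsub
        rw [Nat.card_Icc] at hcard
        have hUn : ((Finset.range n).filter
            fun l => ¬ IsBalancedIdx g d l).card ≤ n :=
          le_trans (Finset.card_filter_le _ _) (by simp)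
        omega
      · have : ((Finset.range n).filter fun l => ¬ IsBalancedIdx g d l).card <
            ((Finset.range g.length).filter
              fun i => 1 ≤ i ∧ d.getD n 0 < g.getD i 0).card :=
          lt_of_le_of_ne hIH (fun h => hCU h.symm)
        omega

end AuxProof

/-- Proposition 2.3: for a pair of partitions `(γ,δ)` and any one-based
index `1 ≤ j ≤ l(δ)`, the number of parts of `γ` other than `γ_1` strictly greater than
`δ_j` is at least the number of unbalanced parts `δ_l` with `l < j`.  (Zero-based: part
`δ_j` is `δ.parts.getD (j-1) 0`, and parts of `γ` other than the first are those with
zero-based index `i ≥ 1`.) -/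
theorem count_unbalanced_le (γ δ : Ptn) (j : ℕ) (hj1 : 1 ≤ j) (hj2 : j ≤ δ.len) :
    ((Finset.range (j - 1)).filter fun l => ¬ IsBalancedIdx γ.parts δ.parts l).card ≤
      ((Finset.range γ.len).filter fun i =>
        1 ≤ i ∧ δ.parts.getD (j - 1) 0 < γ.parts.getD i 0).card := by
  exact count_unbalanced_le_aux γ.parts δ.parts γ.2.1 δ.2.1 (j - 1) (by
    have : δ.len = δ.parts.length := rfl
    omega)
end

section
/- Let (ᾱ,β̄) be a two-line strict shifted partition with l(ᾱ) − l(β̄) = M where M ≥ 2. Assign to each part ᾱ_i the subscript g_i defined by g_1 = 0 and, for i ≥ 2, g_i = (i − 2) − #{j : β̄_j ≥ ᾱ_i}. Then for every integer c with 0 ≤ c ≤ M − 2 there exists an index i with g_i = c; moreover, if ᾱ_{t_c} denotes the smallest part of ᾱ among indices whose subscript equals c, then ᾱ_{t_0} ≥ ᾱ_{t_1} ≥ ... ≥ ᾱ_{t_{M−2}}. -/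
/-- Lemma 2.5: let `(ᾱ,β̄)` be a two-line strict shifted partition with
`l(ᾱ) - l(β̄) = M ≥ 2` and let `g` be the subscript function: `g 1 = 0` and for one-based
`2 ≤ i ≤ l(ᾱ)`, `g i = (i - 2) - #{j : β̄_j ≥ ᾱ_i}`.  Then every `0 ≤ c ≤ M - 2` is
attained as a subscript, and the minimal part of `ᾱ` with subscript `c` is nonincreasing
in `c`.  (One-based part `ᾱ_i` is `a.parts.getD (i-1) 0`.) -/
theorem subscript_surjective_and_antitone (a b : Ptn) (hss : StrictShifted a b)
    (M : ℕ) (hM : 2 ≤ M) (hlen : a.len = b.len + M) (g : ℕ → ℤ) (hg1 : g 1 = 0)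
    (hg : ∀ i, 2 ≤ i → i ≤ a.len →
      g i = (i : ℤ) - 2 -
        (((Finset.range b.len).filter fun j =>
            a.parts.getD (i - 1) 0 ≤ b.parts.getD j 0).card : ℤ)) :
    ∀ c : ℕ, c ≤ M - 2 →
      (∃ i, 1 ≤ i ∧ i ≤ a.len ∧ g i = (c : ℤ)) ∧
      ∀ c' : ℕ, c' ≤ c →
        sInf {x | ∃ i, 1 ≤ i ∧ i ≤ a.len ∧ g i = (c : ℤ) ∧ x = a.parts.getD (i - 1) 0} ≤
          sInf {x | ∃ i, 1 ≤ i ∧ i ≤ a.len ∧ g i = (c' : ℤ) ∧ x = a.parts.getD (i - 1) 0} := by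
  intro c hc
  set n := a.len with hn
  have hn2 : 2 ≤ n := by omega
  have hplen : a.parts.length = n := rfl
  -- parts of `a` are nonincreasing in the index
  have hamono : ∀ i j, i ≤ j → j < n → a.parts.getD j 0 ≤ a.parts.getD i 0 := by
    intro i j hij hj
    rw [List.getD_eq_getElem _ _ (by omega), List.getD_eq_getElem _ _ (by omega)]
    rcases eq_or_lt_of_le hij with h | h
    · subst h; exact le_refl _
    · exact a.2.1.rel_get_of_lt (Fin.mk_lt_mk.mpr h)
  -- step lemma: g increases by at most 1
  have hstep : ∀ i, 1 ≤ i → i + 1 ≤ n → g (i + 1) ≤ g i + 1 := by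
    intro i hi h
    rcases eq_or_lt_of_le hi with h1 | h2
    · have h2' := hg 2 le_rfl (by omega)
      rw [← h1, hg1]
      have : (0 : ℤ) ≤ (((Finset.range b.len).filter fun j =>
          a.parts.getD (2 - 1) 0 ≤ b.parts.getD j 0).card : ℤ) := Int.natCast_nonneg _
      rw [show (1 : ℕ) + 1 = 2 from rfl, h2']
      omega
    · have hgi := hg i (by omega) (by omega)
      have hgi1 := hg (i + 1) (by omega) (by omega)
      have hsub : ((Finset.range b.len).filter fun j =>
            a.parts.getD (i - 1) 0 ≤ b.parts.getD j 0).card ≤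
          ((Finset.range b.len).filter fun j =>
            a.parts.getD (i + 1 - 1) 0 ≤ b.parts.getD j 0).card := by
        apply Finset.card_le_card
        intro j hj
        simp only [Finset.mem_filter] at hj ⊢
        have hmono : a.parts.getD (i + 1 - 1) 0 ≤ a.parts.getD (i - 1) 0 :=
          hamono (i - 1) (i + 1 - 1) (by omega) (by omega)
        exact ⟨hj.1, le_trans hmono hj.2⟩
      simp only [Nat.add_sub_cancel] at hgi1 hsub
      rw [hgi, hgi1]
      push_cast
      omega
  -- lower bound on g n
  have hgn : (M : ℤ) - 2 ≤ g n := by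
    have hgn' := hg n (by omega) le_rfl
    have hcard : ((Finset.range b.len).filter fun j =>
        a.parts.getD (n - 1) 0 ≤ b.parts.getD j 0).card ≤ b.len := by
      calc _ ≤ (Finset.range b.len).card := Finset.card_filter_le _ _
        _ = b.len := Finset.card_range _
    rw [hgn']
    have : (n : ℤ) = (b.len : ℤ) + (M : ℤ) := by exact_mod_cast congrArg (Nat.cast : ℕ → ℤ) hlen
    omega
  -- reachability: from any starting point t with g t ≤ x ≤ g n, some i in [t, n] has g i = x
  have hreach : ∀ d : ℕ, ∀ t, 1 ≤ t → t + d = n → ∀ x : ℤ, g t ≤ x → x ≤ g n →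
      ∃ i, t ≤ i ∧ i ≤ n ∧ g i = x := by
    intro d
    induction d with
    | zero =>
      intro t ht htd x h1 h2
      refine ⟨t, le_rfl, by omega, ?_⟩
      have : t = n := by omega
      subst this
      omega
    | succ d ih =>
      intro t ht htd x h1 h2
      rcases eq_or_lt_of_le h1 with h | h
      · exact ⟨t, le_rfl, by omega, h⟩
      · have hst := hstep t ht (by omega)
        obtain ⟨i, hi1, hi2, hi3⟩ := ih (t + 1) (by omega) (by omega) x (by omega) h2
        exact ⟨i, by omega, hi2, hi3⟩
  -- surjectivity
  have hsurj : ∀ c₀ : ℕ, c₀ ≤ M - 2 → ∃ i, 1 ≤ i ∧ i ≤ n ∧ g i = (c₀ : ℤ) := by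
    intro c₀ hc₀
    have hcle : (c₀ : ℤ) ≤ (M : ℤ) - 2 := by omega
    exact hreach (n - 1) 1 le_rfl (by omega) (c₀ : ℤ) (by rw [hg1]; positivity) (by omega)
  refine ⟨hsurj c hc, ?_⟩
  intro c' hc'
  obtain ⟨i', hi'1, hi'2, hi'3⟩ := hsurj c' (le_trans hc' hc)
  have hne : {x | ∃ i, 1 ≤ i ∧ i ≤ n ∧ g i = (c' : ℤ) ∧
      x = a.parts.getD (i - 1) 0}.Nonempty :=
    ⟨a.parts.getD (i' - 1) 0, i', hi'1, hi'2, hi'3, rfl⟩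
  obtain ⟨t, ht1, ht2, ht3, ht4⟩ := Nat.sInf_mem hne
  obtain ⟨i, hi1, hi2, hi3⟩ := hreach (n - t) t ht1 (by omega) (c : ℤ)
    (by rw [ht3]; exact_mod_cast hc') (by omega)
  calc sInf {x | ∃ i, 1 ≤ i ∧ i ≤ n ∧ g i = (c : ℤ) ∧ x = a.parts.getD (i - 1) 0}
      ≤ a.parts.getD (i - 1) 0 := Nat.sInf_le ⟨i, by omega, hi2, hi3, rfl⟩
    _ ≤ a.parts.getD (t - 1) 0 := hamono (t - 1) (i - 1) (by omega) (by omega)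
    _ = _ := ht4.symm
end
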